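/- Let C = ⟨F_1,...,F_t⟩ be a pure simplicial complex and let H be a finite set disjoint from the vertex set of C. Let D = ⟨F_1 ∪ H, ..., F_t ∪ H⟩. Then: (1) C is k-decomposable if and only if D is k-decomposable, and (2) a face F of C is a shedding face of C if and only if F is a shedding face of D. -/

import Mathlib

open Finset

variable {V : Type*} [DecidableEq V]

/-- A simplicial complex: a finite collection of finite faces closed under subsets. -/
def IsComplex (C : Finset (Finset V)) : Prop :=
  ∀ F ∈ C, ∀ G, G ⊆ F → G ∈ C

/-- `F` is a facet (maximal face) of `C`. -/
def IsFacet (C : Finset (Finset V)) (F : Finset V) : Prop :=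
  F ∈ C ∧ ∀ G ∈ C, F ⊆ G → F = G

/-- `C` is pure of dimension `d`: all facets have cardinality `d+1`. -/
def IsPure (C : Finset (Finset V)) (d : ℕ) : Prop :=
  ∀ F, IsFacet C F → F.card = d + 1

/-- The deletion of a face `F`: all faces not containing `F`. -/
def del (C : Finset (Finset V)) (F : Finset V) : Finset (Finset V) :=
  C.filter (fun G => ¬ F ⊆ G)

/-- The link of a face `F`. -/
def lk (C : Finset (Finset V)) (F : Finset V) : Finset (Finset V) :=
  C.filter (fun G => G ∩ F = ∅ ∧ G ∪ F ∈ C)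

/-- The simplicial complex generated by a collection of faces. -/
def gen (S : Finset (Finset V)) : Finset (Finset V) :=
  S.biUnion Finset.powerset

/-- `C` is a (full) simplex. -/
def IsSimplexCx (C : Finset (Finset V)) : Prop :=
  ∃ F : Finset V, C = F.powerset

/-- `F` is a shedding face of the pure `d`-dimensional complex `C`. -/
def Shedding (C : Finset (Finset V)) (d : ℕ) (F : Finset V) : Prop :=
  F ∈ C ∧ IsPure (del C F) d

/-- `k`-decomposability (Provan–Billera): a simplex, or there is a shedding face `F`
with `dim F ≤ k` whose deletion and link are again `k`-decomposable. -/
inductive Decomp : ℕ → Finset (Finset V) → Prop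
  | simplex (k : ℕ) (C : Finset (Finset V)) : IsSimplexCx C → Decomp k C
  | shed (k : ℕ) (C : Finset (Finset V)) (F : Finset V) (d : ℕ) :
      F ∈ C → F.Nonempty → F.card ≤ k + 1 → IsPure C d → IsPure (del C F) d →
      Decomp k (del C F) → Decomp k (lk C F) → Decomp k C

/-- The 1-dimensional skeleton of a complex, as a simple graph. -/
def skel (C : Finset (Finset V)) : SimpleGraph V where
  Adj x y := x ≠ y ∧ ({x, y} : Finset V) ∈ C
  symm := by
    refine ⟨?_⟩
    rintro x y ⟨hxy, hm⟩
    exact ⟨hxy.symm, by rwa [Finset.pair_comm]⟩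
  loopless := ⟨fun x h => h.1 rfl⟩

/-- A shelling of a pure `d`-dimensional complex: an ordering of the facets such that
each facet meets the union of the previous ones in a pure `(d-1)`-dimensional complex. -/
def IsShelling (C : Finset (Finset V)) (d : ℕ) (L : List (Finset V)) : Prop :=
  L.Nodup ∧ (∀ F, IsFacet C F ↔ F ∈ L) ∧
  ∀ i : ℕ, 1 ≤ i → ∀ h : i < L.length,
    IsPure (gen (L.take i).toFinset ∩ (L.get ⟨i, h⟩).powerset) (d - 1)

open scoped Classical in
/-- `full^d(G)`: the pure `d`-dimensional complex generated by all `(d+1)`-cliques of `G`. -/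
noncomputable def fullC [Fintype V] (d : ℕ) (G : SimpleGraph V) : Finset (Finset V) :=
  gen ((Finset.univ.powerset).filter fun s => G.IsClique (↑s : Set V) ∧ s.card = d + 1)

open scoped Classical in
/-- All `(d+1)`-cliques of `G` containing the set `e`. -/
noncomputable def cliquesWith [Fintype V] (d : ℕ) (G : SimpleGraph V) (e : Finset V) :
    Finset (Finset V) :=
  (Finset.univ.powerset).filter fun s => G.IsClique (↑s : Set V) ∧ s.card = d + 1 ∧ e ⊆ s

/-- `G^H`: join every vertex of `H` to every other vertex. -/
def coneGraph (G : SimpleGraph V) (H : Finset V) : SimpleGraph V where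
  Adj x y := x ≠ y ∧ (G.Adj x y ∨ x ∈ H ∨ y ∈ H)
  symm := by
    refine ⟨?_⟩
    rintro x y ⟨hxy, h⟩
    refine ⟨hxy.symm, ?_⟩
    rcases h with h | h | h
    · exact Or.inl (G.adj_symm h)
    · exact Or.inr (Or.inr h)
    · exact Or.inr (Or.inl h)
  loopless := ⟨fun x h => h.1 rfl⟩

/-- The graph `G` together with the extra edge `ab`. -/
def addEdge (G : SimpleGraph V) (a b : V) : SimpleGraph V :=
  G ⊔ SimpleGraph.fromEdgeSet {s(a, b)}

/-- `C` is fully coned with respect to `H`: every vertex of `H` is adjacent to every other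
vertex of `skel C`, and every `(d+1)`-clique of `skel C` is a facet of `C`. -/
def FullyConed (C : Finset (Finset V)) (d : ℕ) (H : Finset V) : Prop :=
  (∀ h ∈ H, ∀ v : V, ({v} : Finset V) ∈ C → v ≠ h → (skel C).Adj h v) ∧
  (∀ s : Finset V, (skel C).IsClique (↑s : Set V) → s.card = d + 1 → IsFacet C s)

/-! ### Auxiliary lemmas for the padding theorem -/

section PadAux

variable {V : Type*} [DecidableEq V]

private lemma sdiff_subset_iff' {s t u : Finset V} : s \ t ⊆ u ↔ s ⊆ t ∪ u := by
  constructor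
  · intro h x hx
    by_cases hxt : x ∈ t
    · exact mem_union.2 (Or.inl hxt)
    · exact mem_union.2 (Or.inr (h (mem_sdiff.2 ⟨hx, hxt⟩)))
  · intro h x hx
    rcases mem_sdiff.1 hx with ⟨hxs, hxt⟩
    rcases mem_union.1 (h hxs) with h' | h'
    · exact absurd h' hxt
    · exact h'

private lemma subset_sdiff_union' (s t : Finset V) : s ⊆ s \ t ∪ t := by
  intro x hx
  by_cases hxt : x ∈ t
  · exact mem_union.2 (Or.inr hxt)
  · exact mem_union.2 (Or.inl (mem_sdiff.2 ⟨hx, hxt⟩))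

lemma mem_gen' {S : Finset (Finset V)} {G : Finset V} :
    G ∈ gen S ↔ ∃ F ∈ S, G ⊆ F := by
  simp [gen]

lemma isComplex_gen (S : Finset (Finset V)) : IsComplex (gen S) := by
  intro F hF G hG
  rw [mem_gen'] at hF ⊢
  obtain ⟨F', hF', h⟩ := hF
  exact ⟨F', hF', hG.trans h⟩

lemma mem_del' {C : Finset (Finset V)} {F G : Finset V} :
    G ∈ del C F ↔ G ∈ C ∧ ¬ F ⊆ G := by
  simp [del]

lemma mem_lk' {C : Finset (Finset V)} {F G : Finset V} :
    G ∈ lk C F ↔ G ∈ C ∧ G ∩ F = ∅ ∧ G ∪ F ∈ C := by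
  simp [lk, and_assoc]

lemma isComplex_del {C : Finset (Finset V)} (h : IsComplex C) (F : Finset V) :
    IsComplex (del C F) := by
  intro A hA B hB
  rw [mem_del'] at hA ⊢
  exact ⟨h A hA.1 B hB, fun hc => hA.2 (hc.trans hB)⟩

lemma isComplex_lk {C : Finset (Finset V)} (h : IsComplex C) (F : Finset V) :
    IsComplex (lk C F) := by
  intro A hA B hB
  rw [mem_lk'] at hA ⊢
  refine ⟨h A hA.1 B hB, ?_, h _ hA.2.2 _ (union_subset_union_left hB)⟩
  rw [← subset_empty, ← hA.2.1]
  exact inter_subset_inter hB Subset.rfl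

lemma exists_facet {C : Finset (Finset V)} {G : Finset V} (hG : G ∈ C) :
    ∃ M, IsFacet C M ∧ G ⊆ M := by
  obtain ⟨M, hM, hmax⟩ := (C.filter (fun A => G ⊆ A)).exists_max_image Finset.card
    ⟨G, mem_filter.2 ⟨hG, Subset.rfl⟩⟩
  rw [mem_filter] at hM
  refine ⟨M, ⟨hM.1, fun A hA hMA => ?_⟩, hM.2⟩
  have hAf : A ∈ C.filter (fun A => G ⊆ A) := mem_filter.2 ⟨hA, hM.2.trans hMA⟩
  exact eq_of_subset_of_card_le hMA (hmax A hAf)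

private lemma inter_union_eq_empty_iff {a b c : Finset V} :
    a ∩ (b ∪ c) = ∅ ↔ a ∩ b = ∅ ∧ a ∩ c = ∅ := by
  simp only [← disjoint_iff_inter_eq_empty, disjoint_union_right]

/-- `lk` of `lk` is `lk` of the union. -/
lemma lk_lk {C : Finset (Finset V)} (hC : IsComplex C) {σ τ : Finset V}
    (hst : σ ∩ τ = ∅) : lk (lk C σ) τ = lk C (σ ∪ τ) := by
  have hts : τ ∩ σ = ∅ := by rw [inter_comm]; exact hst
  ext G
  rw [mem_lk', mem_lk', mem_lk', mem_lk']
  constructor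
  · rintro ⟨⟨hG, hGσ, hGσC⟩, hGτ, hGτC, hGτσ, hGτσC⟩
    refine ⟨hG, inter_union_eq_empty_iff.2 ⟨hGσ, hGτ⟩, ?_⟩
    have : G ∪ (σ ∪ τ) = G ∪ τ ∪ σ := by
      ext x; simp only [mem_union]; tauto
    rw [this]; exact hGτσC
  · rintro ⟨hG, hGστ, hGστC⟩
    obtain ⟨hGσ, hGτ⟩ := inter_union_eq_empty_iff.1 hGστ
    have hGust : G ∪ τ ∪ σ = G ∪ (σ ∪ τ) := by
      ext x; simp only [mem_union]; tauto
    refine ⟨⟨hG, hGσ, hC _ hGστC _ ?_⟩, hGτ, hC _ hGστC _ ?_, ?_, ?_⟩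
    · intro x hx; rcases mem_union.1 hx with h | h
      · exact mem_union.2 (Or.inl h)
      · exact mem_union.2 (Or.inr (mem_union.2 (Or.inl h)))
    · intro x hx; rcases mem_union.1 hx with h | h
      · exact mem_union.2 (Or.inl h)
      · exact mem_union.2 (Or.inr (mem_union.2 (Or.inr h)))
    · rw [union_inter_distrib_right, hGσ, hts, union_empty]
    · rw [hGust]; exact hGστC

/-- Purity of links. -/
lemma pure_lk {C : Finset (Finset V)} {d : ℕ} (hC : IsComplex C) (hp : IsPure C d)
    {F : Finset V} (hFd : F.card ≤ d) : IsPure (lk C F) (d - F.card) := by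
  intro G hGfac
  obtain ⟨hGm, hGmax⟩ := hGfac
  rw [mem_lk'] at hGm
  obtain ⟨hG, hGF, hGFC⟩ := hGm
  obtain ⟨M, hMfac, hsub⟩ := exists_facet hGFC
  have hFM : F ⊆ M := (subset_union_right).trans hsub
  have hMF : M \ F ∈ lk C F := by
    rw [mem_lk']
    exact ⟨hC M hMfac.1 _ sdiff_subset, sdiff_inter_self _ _,
      by rw [sdiff_union_of_subset hFM]; exact hMfac.1⟩
  have hGMF : G ⊆ M \ F := subset_sdiff.2
    ⟨(subset_union_left).trans hsub, disjoint_iff_inter_eq_empty.2 hGF⟩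
  have hGeq : G = M \ F := hGmax _ hMF hGMF
  have hMcard : M.card = d + 1 := hp M hMfac
  rw [hGeq, card_sdiff_of_subset hFM, hMcard]
  omega

/-- Deletion inside a link. -/
lemma del_lk_eq (C : Finset (Finset V)) (σ F : Finset V) :
    del (lk C F) (σ \ F) = lk (del C σ) F := by
  ext G
  rw [mem_del', mem_lk', mem_lk', mem_del', mem_del']
  constructor
  · rintro ⟨⟨hG, hGF, hGFC⟩, hτ⟩
    have hσG : ¬ σ ⊆ G := fun h => hτ (sdiff_subset.trans h)
    refine ⟨⟨hG, hσG⟩, hGF, hGFC, ?_⟩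
    intro hσGF
    apply hτ
    intro x hx
    rcases mem_sdiff.1 hx with ⟨hxσ, hxF⟩
    rcases mem_union.1 (hσGF hxσ) with h | h
    · exact h
    · exact absurd h hxF
  · rintro ⟨⟨hG, hσG⟩, hGF, hGFC, hσGF⟩
    refine ⟨⟨hG, hGF, hGFC⟩, ?_⟩
    intro hτ
    apply hσGF
    intro x hx
    by_cases hxF : x ∈ F
    · exact mem_union.2 (Or.inr hxF)
    · exact mem_union.2 (Or.inl (hτ (mem_sdiff.2 ⟨hx, hxF⟩)))

/-- When the shedding face cannot be completed inside the star of `F`,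
the link is unchanged by the deletion. -/
lemma lk_del_eq_lk {C : Finset (Finset V)} (hC : IsComplex C) {σ F : Finset V}
    (hFτ : F ∪ σ \ F ∉ C) : lk C F = lk (del C σ) F := by
  ext G
  rw [mem_lk', mem_lk', mem_del', mem_del']
  constructor
  · rintro ⟨hG, hGF, hGFC⟩
    have hτG : ¬ σ \ F ⊆ G := by
      intro hτ
      apply hFτ
      refine hC _ hGFC _ ?_
      intro x hx
      rcases mem_union.1 hx with h | h
      · exact mem_union.2 (Or.inr h)
      · exact mem_union.2 (Or.inl (hτ h))
    refine ⟨⟨hG, fun h => hτG (sdiff_subset.trans h)⟩, hGF, hGFC, ?_⟩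
    intro hσGF
    apply hτG
    intro x hx
    rcases mem_sdiff.1 hx with ⟨hxσ, hxF⟩
    rcases mem_union.1 (hσGF hxσ) with h | h
    · exact h
    · exact absurd h hxF
  · rintro ⟨⟨hG, _⟩, hGF, hGFC, _⟩
    exact ⟨hG, hGF, hGFC⟩

/-- Links of faces of `k`-decomposable complexes are `k`-decomposable. -/
lemma decomp_lk {k : ℕ} {C : Finset (Finset V)} (h : Decomp k C) :
    IsComplex C → ∀ F ∈ C, Decomp k (lk C F) := by
  induction h with
  | simplex C hs =>
    intro hC F hF
    obtain ⟨P, rfl⟩ := hs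
    rw [mem_powerset] at hF
    refine Decomp.simplex _ _ ⟨P \ F, ?_⟩
    ext G
    rw [mem_lk', mem_powerset, mem_powerset, mem_powerset, subset_sdiff,
      disjoint_iff_inter_eq_empty]
    constructor
    · rintro ⟨h1, h2, _⟩; exact ⟨h1, h2⟩
    · rintro ⟨h1, h2⟩; exact ⟨h1, h2, union_subset h1 hF⟩
  | shed C σ d hσ hne hk hp hpd hdd hld ihd ihl =>
    intro hC F hF
    by_cases hσF : σ ⊆ F
    · -- σ ⊆ F : lk C F = lk (lk C σ) (F \ σ)
      have hFσ : F \ σ ∈ lk C σ := by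
        rw [mem_lk']
        exact ⟨hC F hF _ sdiff_subset, sdiff_inter_self _ _,
          by rw [sdiff_union_of_subset hσF]; exact hF⟩
      have heq : lk C F = lk (lk C σ) (F \ σ) := by
        rw [lk_lk hC (inter_sdiff_self σ F), union_sdiff_self_eq_union,
          union_eq_right.2 hσF]
      rw [heq]
      exact ihl (isComplex_lk hC σ) _ hFσ
    · have hτne : (σ \ F).Nonempty := sdiff_nonempty.2 hσF
      have hFdel : F ∈ del C σ := mem_del'.2 ⟨hF, hσF⟩
      by_cases hFτ : F ∪ σ \ F ∈ C
      · -- shed the link of F by σ \ F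
        have hFd : F.card ≤ d := by
          obtain ⟨M, hMfac, hsub⟩ := exists_facet hFτ
          obtain ⟨x, hxτ⟩ := hτne
          have hxM : x ∈ M := hsub (mem_union.2 (Or.inr hxτ))
          have hxF : x ∉ F := (mem_sdiff.1 hxτ).2
          have : F ⊂ M := ssubset_iff_of_subset ((subset_union_left).trans hsub)
            |>.2 ⟨x, hxM, hxF⟩
          have := card_lt_card this
          have := hp M hMfac
          omega
        refine Decomp.shed k (lk C F) (σ \ F) (d - F.card) ?_ hτne
          (le_trans (card_le_card sdiff_subset) hk) ?_ ?_ ?_ ?_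
        · rw [mem_lk']
          exact ⟨hC σ hσ _ sdiff_subset, sdiff_inter_self _ _,
            by rw [sdiff_union_self_eq_union]
               rwa [union_sdiff_self_eq_union, union_comm] at hFτ⟩
        · exact pure_lk hC hp hFd
        · rw [del_lk_eq]
          exact pure_lk (isComplex_del hC σ) hpd hFd
        · rw [del_lk_eq]
          exact ihd (isComplex_del hC σ) _ hFdel
        · -- lk (lk C F) (σ \ F) = lk (lk C σ) (F \ σ)
          have h1 : lk (lk C F) (σ \ F) = lk C (F ∪ σ \ F) :=
            lk_lk hC (inter_sdiff_self F σ)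
          have h2 : lk (lk C σ) (F \ σ) = lk C (σ ∪ F \ σ) :=
            lk_lk hC (inter_sdiff_self σ F)
          have h3 : F ∪ σ \ F = σ ∪ F \ σ := by
            rw [union_sdiff_self_eq_union, union_sdiff_self_eq_union, union_comm]
          have hFσm : F \ σ ∈ lk C σ := by
            rw [mem_lk']
            refine ⟨hC F hF _ sdiff_subset, sdiff_inter_self _ _, ?_⟩
            rw [sdiff_union_self_eq_union]
            rwa [union_sdiff_self_eq_union] at hFτ
          rw [h1, h3, ← h2]
          exact ihl (isComplex_lk hC σ) _ hFσm
      · rw [lk_del_eq_lk hC hFτ]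
        exact ihd (isComplex_del hC σ) _ hFdel

/-! ### The padding operation -/

/-- Join of a complex with the full simplex on `H`. -/
def pad (C : Finset (Finset V)) (H : Finset V) : Finset (Finset V) :=
  (C ×ˢ H.powerset).image fun p => p.1 ∪ p.2

lemma mem_pad {C : Finset (Finset V)} {H G : Finset V}
    (hd : ∀ A ∈ C, Disjoint A H) : G ∈ pad C H ↔ G \ H ∈ C := by
  constructor
  · intro hG
    obtain ⟨⟨A, B⟩, hAB, rfl⟩ := mem_image.1 hG
    rw [mem_product, mem_powerset] at hAB
    have : (A ∪ B) \ H = A := by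
      rw [union_sdiff_distrib, Finset.sdiff_eq_self_iff_disjoint.2 (hd A hAB.1),
        sdiff_eq_empty_iff_subset.2 hAB.2, union_empty]
    rw [this]; exact hAB.1
  · intro hG
    refine mem_image.2 ⟨⟨G \ H, G ∩ H⟩, ?_, ?_⟩
    · rw [mem_product, mem_powerset]; exact ⟨hG, inter_subset_right⟩
    · exact sdiff_union_inter G H

lemma isComplex_pad {C : Finset (Finset V)} (hC : IsComplex C)
    {H : Finset V} (hd : ∀ A ∈ C, Disjoint A H) : IsComplex (pad C H) := by
  intro A hA B hB
  rw [mem_pad hd] at hA ⊢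
  exact hC _ hA _ (sdiff_subset_sdiff hB Subset.rfl)

lemma facet_pad {C : Finset (Finset V)} {H : Finset V}
    (hd : ∀ A ∈ C, Disjoint A H) {G : Finset V} :
    IsFacet (pad C H) G ↔ H ⊆ G ∧ IsFacet C (G \ H) := by
  have sdiffH : ∀ X : Finset V, (X ∪ H) \ H = X \ H := by
    intro X
    rw [union_sdiff_distrib, Finset.sdiff_self, union_empty]
  constructor
  · rintro ⟨hG, hmax⟩
    have hGH : G \ H ∈ C := (mem_pad hd).1 hG
    have hu : G ∪ H ∈ pad C H := by
      rw [mem_pad hd, sdiffH]; exact hGH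
    have hGeq : G = G ∪ H := hmax _ hu subset_union_left
    have hHG : H ⊆ G := by
      rw [← union_eq_left]; exact hGeq.symm
    refine ⟨hHG, hGH, fun A hA hsub => ?_⟩
    have hAH : A ∪ H ∈ pad C H := by
      rw [mem_pad hd, sdiffH, Finset.sdiff_eq_self_iff_disjoint.2 (hd A hA)]; exact hA
    have hGA : G ⊆ A ∪ H := by
      calc G = G \ H ∪ H := (sdiff_union_of_subset hHG).symm
      _ ⊆ A ∪ H := union_subset_union_left hsub
    have := hmax _ hAH hGA
    rw [this, sdiffH, Finset.sdiff_eq_self_iff_disjoint.2 (hd A hA)]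
  · rintro ⟨hHG, hGH, hmax⟩
    refine ⟨(mem_pad hd).2 hGH, fun A hA hsub => ?_⟩
    have hAH : A \ H ∈ C := (mem_pad hd).1 hA
    have h1 : G \ H ⊆ A \ H := sdiff_subset_sdiff hsub Subset.rfl
    have h2 : G \ H = A \ H := hmax _ hAH h1
    apply Subset.antisymm hsub
    calc A ⊆ A \ H ∪ H := subset_sdiff_union' A H
    _ = G \ H ∪ H := by rw [h2]
    _ = G := sdiff_union_of_subset hHG

lemma pure_pad_iff {C : Finset (Finset V)} {H : Finset V}
    (hd : ∀ A ∈ C, Disjoint A H) {d : ℕ} :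
    IsPure C d ↔ IsPure (pad C H) (d + H.card) := by
  constructor
  · intro hp G hGfac
    obtain ⟨hHG, hfac⟩ := (facet_pad hd).1 hGfac
    have h1 : (G \ H).card = d + 1 := hp _ hfac
    have h2 : G.card = (G \ H).card + H.card := by
      rw [← card_union_of_disjoint sdiff_disjoint, sdiff_union_of_subset hHG]
    omega
  · intro hp A hAfac
    have hfac : IsFacet (pad C H) (A ∪ H) := by
      rw [facet_pad hd]
      refine ⟨subset_union_right, ?_⟩
      rw [union_sdiff_distrib, Finset.sdiff_self, union_empty,
        Finset.sdiff_eq_self_iff_disjoint.2 (hd A hAfac.1)]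
      exact hAfac
    have h1 : (A ∪ H).card = d + H.card + 1 := hp _ hfac
    have h2 : (A ∪ H).card = A.card + H.card := card_union_of_disjoint (hd A hAfac.1)
    omega

lemma del_pad {C : Finset (Finset V)} {H : Finset V}
    (hd : ∀ A ∈ C, Disjoint A H) {σ : Finset V} (hσH : Disjoint σ H) :
    del (pad C H) σ = pad (del C σ) H := by
  have hd' : ∀ A ∈ del C σ, Disjoint A H := fun A hA => hd A (mem_del'.1 hA).1
  ext G
  rw [mem_del', mem_pad hd, mem_pad hd', mem_del']
  have : σ ⊆ G ↔ σ ⊆ G \ H := by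
    constructor
    · intro h; exact subset_sdiff.2 ⟨h, hσH⟩
    · intro h; exact h.trans sdiff_subset
  tauto

lemma lk_pad {C : Finset (Finset V)} {H : Finset V}
    (hd : ∀ A ∈ C, Disjoint A H) {σ : Finset V} (hσ : σ ∈ C) :
    lk (pad C H) σ = pad (lk C σ) H := by
  have hσH : Disjoint σ H := hd σ hσ
  have hd' : ∀ A ∈ lk C σ, Disjoint A H := fun A hA => hd A (mem_lk'.1 hA).1
  ext G
  rw [mem_lk', mem_pad hd, mem_pad hd', mem_pad hd, mem_lk']
  have h1 : (G ∪ σ) \ H = G \ H ∪ σ := by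
    rw [union_sdiff_distrib, Finset.sdiff_eq_self_iff_disjoint.2 hσH]
  have h2 : G ∩ σ = ∅ ↔ G \ H ∩ σ = ∅ := by
    simp only [eq_empty_iff_forall_notMem, mem_inter, mem_sdiff]
    constructor
    · intro h x hx
      exact h x ⟨hx.1.1, hx.2⟩
    · intro h x hx
      have hxH : x ∉ H := Finset.disjoint_left.1 hσH hx.2
      exact h x ⟨⟨hx.1, hxH⟩, hx.2⟩
  rw [h1, h2]

lemma lk_pad_self {C : Finset (Finset V)} {H : Finset V}
    (hd : ∀ A ∈ C, Disjoint A H) (h0 : ∅ ∈ C) : lk (pad C H) H = C := by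
  ext G
  rw [mem_lk', mem_pad hd, mem_pad hd]
  have hH : (G ∪ H) \ H = G \ H := by
    rw [union_sdiff_distrib, Finset.sdiff_self, union_empty]
  rw [hH]
  constructor
  · rintro ⟨hG, hGH, -⟩
    rwa [Finset.sdiff_eq_self_iff_disjoint.2 (disjoint_iff_inter_eq_empty.2 hGH)] at hG
  · intro hG
    have hGH : Disjoint G H := hd G hG
    rw [Finset.sdiff_eq_self_iff_disjoint.2 hGH]
    exact ⟨hG, disjoint_iff_inter_eq_empty.1 hGH, hG⟩

/-- Padding preserves `k`-decomposability (forward direction). -/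
lemma decomp_pad {k : ℕ} {C : Finset (Finset V)} {H : Finset V} (h : Decomp k C) :
    (∀ A ∈ C, Disjoint A H) → Decomp k (pad C H) := by
  induction h with
  | simplex C hs =>
    intro hd
    obtain ⟨P, rfl⟩ := hs
    refine Decomp.simplex _ _ ⟨P ∪ H, ?_⟩
    ext G
    rw [mem_pad hd, mem_powerset, mem_powerset, sdiff_subset_iff', union_comm]
  | shed C σ d hσ hne hk hp hpd hdd hld ihd ihl =>
    intro hd
    have hσH : Disjoint σ H := hd σ hσ
    have hddel : ∀ A ∈ del C σ, Disjoint A H := fun A hA => hd A (mem_del'.1 hA).1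
    have hdlk : ∀ A ∈ lk C σ, Disjoint A H := fun A hA => hd A (mem_lk'.1 hA).1
    refine Decomp.shed k (pad C H) σ (d + H.card) ?_ hne hk ?_ ?_ ?_ ?_
    · rw [mem_pad hd, Finset.sdiff_eq_self_iff_disjoint.2 hσH]; exact hσ
    · exact (pure_pad_iff hd).1 hp
    · rw [del_pad hd hσH]
      exact (pure_pad_iff hddel).1 hpd
    · rw [del_pad hd hσH]
      exact ihd hddel
    · rw [lk_pad hd hσ]
      exact ihl hdlk

end PadAux

/-- Padding every facet with a disjoint set `H` preserves `k`-decomposability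
and shedding faces. -/
theorem padding (S : Finset (Finset V)) (H : Finset V) (d k : ℕ)
    (hP : IsPure (gen S) d) (hdisj : ∀ F ∈ S, Disjoint F H) :
    (Decomp k (gen S) ↔ Decomp k (gen (S.image (· ∪ H)))) ∧
    (∀ F ∈ gen S, F.Nonempty →
      (Shedding (gen S) d F ↔ Shedding (gen (S.image (· ∪ H))) (d + H.card) F)) := by
  classical
  have hC : IsComplex (gen S) := isComplex_gen S
  have hd : ∀ A ∈ gen S, Disjoint A H := by
    intro A hA
    obtain ⟨F, hF, hsub⟩ := mem_gen'.1 hA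
    exact (hdisj F hF).mono_left hsub
  have hpadeq : gen (S.image (· ∪ H)) = pad (gen S) H := by
    ext G
    rw [mem_gen', mem_pad hd, mem_gen']
    constructor
    · rintro ⟨F', hF', hsub⟩
      obtain ⟨F, hF, rfl⟩ := mem_image.1 hF'
      refine ⟨F, hF, ?_⟩
      rw [sdiff_subset_iff', union_comm]
      exact hsub
    · rintro ⟨F, hF, hsub⟩
      refine ⟨F ∪ H, mem_image_of_mem _ hF, ?_⟩
      rw [← union_comm, ← sdiff_subset_iff']
      exact hsub
  rw [hpadeq]
  constructor
  · constructor
    · intro h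
      exact decomp_pad h hd
    · intro h
      rcases S.eq_empty_or_nonempty with rfl | ⟨F0, hF0⟩
      · have : pad (gen (∅ : Finset (Finset V))) H = gen (∅ : Finset (Finset V)) := by
          simp [pad, gen]
        rwa [this] at h
      · have h0 : ∅ ∈ gen S := mem_gen'.2 ⟨F0, hF0, empty_subset _⟩
        have hHm : H ∈ pad (gen S) H := by
          rw [mem_pad hd, Finset.sdiff_self]; exact h0
        have := decomp_lk h (isComplex_pad hC hd) H hHm
        rwa [lk_pad_self hd h0] at this
  · intro F hF hFne
    have hdF : Disjoint F H := hd F hF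
    have hddel : ∀ A ∈ del (gen S) F, Disjoint A H := fun A hA => hd A (mem_del'.1 hA).1
    constructor
    · rintro ⟨hm, hp'⟩
      refine ⟨(mem_pad hd).2 (by rwa [Finset.sdiff_eq_self_iff_disjoint.2 hdF]), ?_⟩
      rw [del_pad hd hdF]
      exact (pure_pad_iff hddel).1 hp'
    · rintro ⟨hm, hp'⟩
      refine ⟨hF, ?_⟩
      rw [del_pad hd hdF] at hp'
      exact (pure_pad_iff hddel).2 hp'
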